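/- The transformation function trans preserves the relative order of program events: if two program events a, b satisfy (a,b) ∈ <_{comp(t⁺)}, then (a,b) ∈ <_{t'} where t' = trans(comp(t⁺), h', []). -/

import Mathlib

inductive Event (T PS Op Val : Type) : Type
  | step : T → PS → Event T PS Op Val
  | effS : T → PS → Event T PS Op Val
  | inv  : Op → Val → Event T PS Op Val
  | res  : Op → Val → Event T PS Op Val
  | effO : Op → Val → Event T PS Op Val

namespace Event

variable {T PS Op Val : Type}

/-- `precedes t a b`: `a` occurs at an earlier index than `b` in the trace `t`. -/
def precedes (t : List (Event T PS Op Val)) (a b : Event T PS Op Val) : Prop :=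
  ∃ i j, i < j ∧ t[(i : ℕ)]? = some a ∧ t[(j : ℕ)]? = some b

/-- Program events: program steps and their effects. -/
def IsProgEvent : Event T PS Op Val → Prop
  | step _ _ => True
  | effS _ _ => True
  | _ => False

/-- Invocation or response event. -/
def isIR : Event T PS Op Val → Bool
  | inv _ _ => true
  | res _ _ => true
  | _ => false

/-- Restriction of a trace to its invocation and response events. -/
def restrictIR (t : List (Event T PS Op Val)) : List (Event T PS Op Val) := t.filter isIR

/-- Well-formedness of traces: invocations precede matching responses and effects,
program steps precede their effects, and response/effect outputs agree. -/
def WellFormed (t : List (Event T PS Op Val)) : Prop :=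
  (∀ j a out, (t[(j : ℕ)]? = some (res a out) ∨ t[j]? = some (effO a out)) →
      ∃ i inp, i < j ∧ t[i]? = some (inv a inp)) ∧
  (∀ j τ p, t[(j : ℕ)]? = some (effS τ p) → ∃ i, i < j ∧ t[i]? = some (step τ p)) ∧
  (∀ a outr oute, res a outr ∈ t → effO a oute ∈ t → outr = oute)

/-- `ext t`: the extensions of trace `t` by a sequence of response events. -/
def ext (t : List (Event T PS Op Val)) : Set (List (Event T PS Op Val)) :=
  {u | ∃ tr, u = t ++ tr ∧ (∀ e ∈ tr, ∃ c v, e = res c v) ∧ u.Nodup}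

open Classical in
/-- `comp t` removes from `t` every invocation with neither a later response
nor a later operation effect. -/
noncomputable def comp : List (Event T PS Op Val) → List (Event T PS Op Val)
  | [] => []
  | e :: rest =>
    if ∃ a inp, e = inv a inp ∧ ∀ out, res a out ∉ rest ∧ effO a out ∉ rest
    then comp rest
    else e :: comp rest

/-- `Allows R t` : the (partial) order `R` allows the trace `t`. -/
def Allows (R : Event T PS Op Val → Event T PS Op Val → Prop)
    (t : List (Event T PS Op Val)) : Prop :=
  ∀ a b, R a b → b ∈ t → precedes t a b

/-- The operation order `⪯_t`: pairs `(res c, inv d)` with the response before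
the invocation in `t`. -/
def OpOrd (t : List (Event T PS Op Val)) (e e' : Event T PS Op Val) : Prop :=
  (∃ c v, e = res c v) ∧ (∃ d w, e' = inv d w) ∧ precedes t e e'

/-- Atomic history: every invocation is immediately followed by its response and
every response immediately preceded by its invocation. -/
def Atomic (h : List (Event T PS Op Val)) : Prop :=
  (∀ i a inp, h[(i : ℕ)]? = some (inv a inp) → ∃ out, h[i + 1]? = some (res a out)) ∧
  (∀ i a out, h[(i : ℕ)]? = some (res a out) → ∃ j inp, i = j + 1 ∧ h[j]? = some (inv a inp))

/-- The thread of an object event (invocation or response), if any. -/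
def objThread (thread : Op → T) : Event T PS Op Val → Option T
  | inv o _ => some (thread o)
  | res o _ => some (thread o)
  | _ => none

/-- Thread equivalence: equal per-thread subsequences of invocations and responses. -/
def threadEquiv [DecidableEq T] (thread : Op → T) (t h : List (Event T PS Op Val)) : Prop :=
  ∀ τ : T, t.filter (fun e => decide (objThread thread e = some τ)) =
           h.filter (fun e => decide (objThread thread e = some τ))

open Classical in
/-- The transformation function `trans` of the soundness proof (cases (T1)–(T5)). -/
noncomputable def trans : List (Event T PS Op Val) → List (Event T PS Op Val) →
    List (Event T PS Op Val) → List (Event T PS Op Val)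
  | t, h', r =>
    if h5 : ∃ a inp out, h'.head? = some (inv a inp) ∧ inv a inp ∈ r ∧ res a out ∈ t then
      -- (T5)
      let a := h5.choose
      let inp := h5.choose_spec.choose
      let out := h5.choose_spec.choose_spec.choose
      inv a inp :: effO a out :: res a out ::
        trans t h'.tail.tail (r.eraseP (fun e => decide (e = inv a inp)))
    else
      match t with
      | [] => []
      | .inv a inp :: ts =>
          if h1 : h'.head? = some (inv a inp) ∧ ∃ out, res a out ∈ (inv a inp :: ts) then
            -- (T1)
            inv a inp :: effO a h1.2.choose :: res a h1.2.choose ::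
              trans ts h'.tail.tail r
          else
            -- (T2)
            trans ts h' (r ++ [inv a inp])
      | .res _ _ :: ts => trans ts h' r        -- (T3)
      | .effO _ _ :: ts => trans ts h' r       -- (T3)
      | .step s p :: ts => step s p :: trans ts h' r   -- (T4)
      | .effS s p :: ts => effS s p :: trans ts h' r   -- (T4)
  termination_by t h' r => t.length + h'.length
  decreasing_by
    · obtain ⟨a, inp, out, hh, -, -⟩ := h5
      have hne : h' ≠ [] := by intro hcon; subst hcon; simp at hh
      have h0 : 0 < h'.length := List.length_pos_iff.mpr hne
      simp_wf
      omega
    all_goals simp_wf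
    all_goals omega

/-- Atomic-style traces: blocks `[inv a in, eff a out, res a out]` interleaved with
program events, each operation appearing in exactly one block. -/
inductive AtomicStyle : List (Event T PS Op Val) → Prop
  | nil : AtomicStyle []
  | prog {e : Event T PS Op Val} {t : List (Event T PS Op Val)} :
      IsProgEvent e → AtomicStyle t → AtomicStyle (e :: t)
  | block {a : Op} {inp out : Val} {t : List (Event T PS Op Val)} :
      (∀ v : Val, inv a v ∉ t ∧ res a v ∉ t ∧ effO a v ∉ t) →
      AtomicStyle t →
      AtomicStyle (inv a inp :: effO a out :: res a out :: t)

/-- Boolean version of `IsProgEvent`. -/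
def isProgB : Event T PS Op Val → Bool
  | step _ _ => true
  | effS _ _ => true
  | _ => false

lemma isProgB_of_isProgEvent {e : Event T PS Op Val} (h : IsProgEvent e) :
    isProgB e = true := by
  cases e <;> simp [IsProgEvent, isProgB] at h ⊢

lemma pair_sublist_of_precedes {t : List (Event T PS Op Val)} {a b : Event T PS Op Val}
    (h : precedes t a b) : List.Sublist [a, b] t := by
  obtain ⟨i, j, hij, ha, hb⟩ := h
  have hdrop : a :: t.drop (i + 1) = t.drop i := by
    have hi : i < t.length := by
      by_contra hcon
      rw [List.getElem?_eq_none (le_of_not_gt hcon)] at ha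
      simp at ha
    have hget : t[i] = a := by
      rw [List.getElem?_eq_getElem hi] at ha
      exact Option.some.inj ha
    rw [← hget]
    exact List.getElem_cons_drop hi
  have hbmem : b ∈ t.drop (i + 1) := by
    have : (t.drop (i + 1))[j - (i + 1)]? = some b := by
      rw [List.getElem?_drop]
      have : i + 1 + (j - (i + 1)) = j := by omega
      rw [this]; exact hb
    exact List.mem_of_getElem? this
  have h1 : List.Sublist [a, b] (t.drop i) :=
    hdrop ▸ ((List.singleton_sublist.mpr hbmem).cons₂ a)
  exact h1.trans (List.drop_sublist i t)

lemma precedes_of_pair_sublist : ∀ {t : List (Event T PS Op Val)} {a b : Event T PS Op Val},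
    List.Sublist [a, b] t → precedes t a b := by
  intro t
  induction t with
  | nil => intro a b h; exact absurd h (by simp)
  | cons x t ih =>
    intro a b h
    cases h with
    | cons _ h' =>
      obtain ⟨i, j, hij, ha, hb⟩ := ih h'
      exact ⟨i + 1, j + 1, by omega, ha, hb⟩
    | cons_cons _ h' =>
      have hbmem : b ∈ t := List.singleton_sublist.mp h'
      obtain ⟨j, hj⟩ := List.getElem?_of_mem hbmem
      exact ⟨0, j + 1, by omega, rfl, hj⟩

lemma filter_trans : ∀ (n : ℕ) (t h' r : List (Event T PS Op Val)),
    t.length + h'.length ≤ n →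
    (trans t h' r).filter isProgB = t.filter isProgB := by
  intro n
  induction n with
  | zero =>
    intro t h' r hle
    have ht : t = [] := by cases t <;> simp_all
    have hh : h' = [] := by cases h' <;> simp_all
    subst ht hh
    rw [Event.trans.eq_def]
    simp
  | succ n ih =>
    intro t h' r hle
    rw [trans.eq_def]
    split
    split
    · next h5 =>
      have hh := h5.choose_spec.choose_spec.choose_spec.1
      have hne : h' ≠ [] := fun hcon => by simp [hcon] at hh
      have hlen : t.length + h'.tail.tail.length ≤ n := by
        have h0 : 0 < h'.length := List.length_pos_iff.mpr hne
        simp only [List.length_tail]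
        omega
      simp only [List.filter_cons, isProgB, Bool.false_eq_true, if_false]
      exact ih t h'.tail.tail _ hlen
    · next h5 =>
      split
      · simp
      · next a inp ts h1 =>
        split
        · next hc =>
          have hlen : ts.length + h'.tail.tail.length ≤ n := by
            simp only [List.length_tail, List.length_cons] at hle ⊢
            omega
          simp only [List.filter_cons, isProgB, Bool.false_eq_true, if_false]
          exact ih ts h'.tail.tail r hlen
        · next hc =>
          have hlen : ts.length + h'.length ≤ n := by
            simp only [List.length_cons] at hle; omega
          simp only [List.filter_cons, isProgB, Bool.false_eq_true, if_false]
          exact ih ts h' _ hlen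
      · next a v ts h1 =>
        have hlen : ts.length + h'.length ≤ n := by
          simp only [List.length_cons] at hle; omega
        simp only [List.filter_cons, isProgB, Bool.false_eq_true, if_false]
        exact ih ts h' r hlen
      · next a v ts h1 =>
        have hlen : ts.length + h'.length ≤ n := by
          simp only [List.length_cons] at hle; omega
        simp only [List.filter_cons, isProgB, Bool.false_eq_true, if_false]
        exact ih ts h' r hlen
      · next s p ts h1 =>
        have hlen : ts.length + h'.length ≤ n := by
          simp only [List.length_cons] at hle; omega
        simp [List.filter_cons, isProgB, ih ts h' r hlen]
      · next s p ts h1 =>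
        have hlen : ts.length + h'.length ≤ n := by
          simp only [List.length_cons] at hle; omega
        simp [List.filter_cons, isProgB, ih ts h' r hlen]

end Event

/-- `trans` preserves the relative order of program events: if two
program events `a`, `b` satisfy `(a,b) ∈ <_{comp tplus}`, then
`(a,b) ∈ <_{trans (comp tplus) h' []}`. -/
theorem stmt15 {T PS Op Val : Type}
    (tplus h' : List (Event T PS Op Val)) (hnd : tplus.Nodup) :
    ∀ a b : Event T PS Op Val, Event.IsProgEvent a → Event.IsProgEvent b →
      Event.precedes (Event.comp tplus) a b →
      Event.precedes (Event.trans (Event.comp tplus) h' []) a b := by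
  intro a b ha hb hprec
  apply Event.precedes_of_pair_sublist
  have h1 : List.Sublist [a, b] ((Event.comp tplus).filter Event.isProgB) := by
    have := (Event.pair_sublist_of_precedes hprec).filter Event.isProgB
    simpa [List.filter_cons, Event.isProgB_of_isProgEvent ha,
      Event.isProgB_of_isProgEvent hb] using this
  have h2 := Event.filter_trans ((Event.comp tplus).length + h'.length)
    (Event.comp tplus) h' [] le_rfl
  rw [← h2] at h1
  exact h1.trans List.filter_sublist
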